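/- MMD for translation-invariant kernels via characteristic functions: if K(x,y) = ∫ cos(t(x−y)) dΛ(t) for a finite nonnegative Borel measure Λ on ℝ, then for probability measures P₀, P₁ on ℝ with characteristic functions f̂₀, f̂₁, γ_K²(P₀,P₁) = ∫ |f̂₀(t) − f̂₁(t)|² dΛ(t). -/

import Mathlib

open MeasureTheory

/-- The characteristic function of a measure on ℝ. -/
noncomputable def charFunction (P : Measure ℝ) (t : ℝ) : ℂ :=
  ∫ x, Complex.exp (t * x * Complex.I) ∂P

noncomputable def cInt (P : Measure ℝ) (t : ℝ) : ℝ := ∫ x, Real.cos (t * x) ∂P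
noncomputable def sInt (P : Measure ℝ) (t : ℝ) : ℝ := ∫ x, Real.sin (t * x) ∂P

lemma integrable_bdd {α : Type*} [MeasurableSpace α] {μ : Measure α} [IsFiniteMeasure μ]
    {f : α → ℝ} (hf : AEStronglyMeasurable f μ) {C : ℝ} (h : ∀ x, |f x| ≤ C) :
    Integrable f μ :=
  (integrable_const C).mono' hf (Filter.Eventually.of_forall h)

lemma cInt_meas (P : Measure ℝ) [IsProbabilityMeasure P] : Measurable (cInt P) := by
  have : StronglyMeasurable (fun p : ℝ × ℝ => Real.cos (p.1 * p.2)) :=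
    (Real.continuous_cos.comp (continuous_fst.mul continuous_snd)).stronglyMeasurable
  exact this.integral_prod_right'.measurable

lemma sInt_meas (P : Measure ℝ) [IsProbabilityMeasure P] : Measurable (sInt P) := by
  have : StronglyMeasurable (fun p : ℝ × ℝ => Real.sin (p.1 * p.2)) :=
    (Real.continuous_sin.comp (continuous_fst.mul continuous_snd)).stronglyMeasurable
  exact this.integral_prod_right'.measurable

lemma cInt_bdd (P : Measure ℝ) [IsProbabilityMeasure P] (t : ℝ) : |cInt P t| ≤ 1 := by
  have := norm_integral_le_of_norm_le_const (μ := P)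
    (f := fun x => Real.cos (t * x)) (C := 1)
    (Filter.Eventually.of_forall fun x => by
      simpa using Real.abs_cos_le_one (t * x))
  simpa [cInt] using this

lemma sInt_bdd (P : Measure ℝ) [IsProbabilityMeasure P] (t : ℝ) : |sInt P t| ≤ 1 := by
  have := norm_integral_le_of_norm_le_const (μ := P)
    (f := fun x => Real.sin (t * x)) (C := 1)
    (Filter.Eventually.of_forall fun x => by
      simpa using Real.abs_sin_le_one (t * x))
  simpa [sInt] using this

/-- The mixed double integral in terms of cInt/sInt. -/
lemma mixed_eq (Λ : Measure ℝ) [IsFiniteMeasure Λ]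
    (P Q : Measure ℝ) [IsProbabilityMeasure P] [IsProbabilityMeasure Q] :
    (∫ x, ∫ y, (∫ t, Real.cos (t * (x - y)) ∂Λ) ∂Q ∂P)
      = ∫ t, (cInt P t * cInt Q t + sInt P t * sInt Q t) ∂Λ := by
  -- step 1: inner swap (for each x)
  have step1 : ∀ x : ℝ, (∫ y, (∫ t, Real.cos (t * (x - y)) ∂Λ) ∂Q)
      = ∫ t, (Real.cos (t * x) * cInt Q t + Real.sin (t * x) * sInt Q t) ∂Λ := by
    intro x
    have hint : Integrable (Function.uncurry fun y t => Real.cos (t * (x - y))) (Q.prod Λ) := by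
      apply integrable_bdd
      · exact (Real.continuous_cos.comp
          (continuous_snd.mul (continuous_const.sub continuous_fst))).aestronglyMeasurable
      · exact fun p => Real.abs_cos_le_one _
    rw [integral_integral_swap hint]
    refine integral_congr_ae (Filter.Eventually.of_forall fun t => ?_)
    have hc : Integrable (fun y => Real.cos (t * y)) Q :=
      integrable_bdd (Real.continuous_cos.comp (continuous_const.mul continuous_id)).aestronglyMeasurable
        (fun y => Real.abs_cos_le_one _)
    have hs : Integrable (fun y => Real.sin (t * y)) Q :=
      integrable_bdd (Real.continuous_sin.comp (continuous_const.mul continuous_id)).aestronglyMeasurable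
        (fun y => Real.abs_sin_le_one _)
    calc (∫ y, Real.cos (t * (x - y)) ∂Q)
        = ∫ y, (Real.cos (t * x) * Real.cos (t * y) + Real.sin (t * x) * Real.sin (t * y)) ∂Q := by
          refine integral_congr_ae (Filter.Eventually.of_forall fun y => ?_)
          simp only [mul_sub, Real.cos_sub]
      _ = Real.cos (t * x) * cInt Q t + Real.sin (t * x) * sInt Q t := by
          rw [integral_add (hc.const_mul _) (hs.const_mul _), integral_const_mul, integral_const_mul]
          rfl
  simp_rw [step1]
  -- step 2: outer swap
  have hint2 : Integrable (Function.uncurry fun x t =>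
      Real.cos (t * x) * cInt Q t + Real.sin (t * x) * sInt Q t) (P.prod Λ) := by
    apply integrable_bdd (C := 2)
    · apply Measurable.aestronglyMeasurable
      apply Measurable.add
      · exact (Real.continuous_cos.comp (continuous_snd.mul continuous_fst)).measurable.mul
          ((cInt_meas Q).comp measurable_snd)
      · exact (Real.continuous_sin.comp (continuous_snd.mul continuous_fst)).measurable.mul
          ((sInt_meas Q).comp measurable_snd)
    · intro p
      refine (abs_add_le _ _).trans ?_
      have h1 : |Real.cos (p.2 * p.1) * cInt Q p.2| ≤ 1 := by
        rw [abs_mul]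
        exact mul_le_one₀ (Real.abs_cos_le_one _) (abs_nonneg _) (cInt_bdd Q _)
      have h2 : |Real.sin (p.2 * p.1) * sInt Q p.2| ≤ 1 := by
        rw [abs_mul]
        exact mul_le_one₀ (Real.abs_sin_le_one _) (abs_nonneg _) (sInt_bdd Q _)
      linarith
  rw [integral_integral_swap hint2]
  refine integral_congr_ae (Filter.Eventually.of_forall fun t => ?_)
  have hc : Integrable (fun x => Real.cos (t * x)) P :=
    integrable_bdd (Real.continuous_cos.comp (continuous_const.mul continuous_id)).aestronglyMeasurable
      (fun y => Real.abs_cos_le_one _)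
  have hs : Integrable (fun x => Real.sin (t * x)) P :=
    integrable_bdd (Real.continuous_sin.comp (continuous_const.mul continuous_id)).aestronglyMeasurable
      (fun y => Real.abs_sin_le_one _)
  show (∫ x, (Real.cos (t * x) * cInt Q t + Real.sin (t * x) * sInt Q t) ∂P)
    = cInt P t * cInt Q t + sInt P t * sInt Q t
  rw [integral_add (hc.mul_const _) (hs.mul_const _), integral_mul_const, integral_mul_const]
  rfl

lemma charFunction_eq (P : Measure ℝ) [IsProbabilityMeasure P] (t : ℝ) :
    charFunction P t = (cInt P t : ℂ) + (sInt P t : ℂ) * Complex.I := by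
  have hc : Integrable (fun x => (Real.cos (t * x) : ℂ)) P :=
    (integrable_bdd (Real.continuous_cos.comp (continuous_const.mul continuous_id)).aestronglyMeasurable
      (fun y => Real.abs_cos_le_one _)).ofReal
  have hs : Integrable (fun x => (Real.sin (t * x) : ℂ)) P :=
    (integrable_bdd (Real.continuous_sin.comp (continuous_const.mul continuous_id)).aestronglyMeasurable
      (fun y => Real.abs_sin_le_one _)).ofReal
  have key : ∀ x : ℝ, Complex.exp (t * x * Complex.I)
      = (Real.cos (t * x) : ℂ) + (Real.sin (t * x) : ℂ) * Complex.I := by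
    intro x
    rw [show ((t : ℂ) * x) = ((t * x : ℝ) : ℂ) by push_cast; ring, Complex.exp_mul_I,
      ← Complex.ofReal_cos, ← Complex.ofReal_sin]
  unfold charFunction
  simp_rw [key]
  rw [integral_add hc (hs.mul_const _)]
  congr 1
  · exact integral_ofReal
  · rw [show (fun x => (Real.sin (t * x) : ℂ) * Complex.I)
        = fun x => (Real.sin (t * x) : ℂ) • Complex.I from rfl,
      integral_smul_const, smul_eq_mul]
    congr 1
    exact integral_ofReal

/-- MMD for translation-invariant kernels via characteristic functions: if
K(x,y) = ∫ cos(t(x−y)) dΛ(t) for a finite nonnegative Borel measure Λ on ℝ (Bochner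
representation), then γ_K²(P₀,P₁) = ∫ |f̂₀(t) − f̂₁(t)|² dΛ(t). -/
theorem mmd_translation_invariant_eq_charFunction_integral
    (Λ : Measure ℝ) [IsFiniteMeasure Λ]
    (K : ℝ → ℝ → ℝ) (hK : ∀ x y, K x y = ∫ t, Real.cos (t * (x - y)) ∂Λ)
    (P₀ P₁ : Measure ℝ) [IsProbabilityMeasure P₀] [IsProbabilityMeasure P₁] :
    (∫ x, ∫ x', K x x' ∂P₀ ∂P₀) + (∫ y, ∫ y', K y y' ∂P₁ ∂P₁)
      - 2 * (∫ x, ∫ y, K x y ∂P₁ ∂P₀)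
      = ∫ t, ‖charFunction P₀ t - charFunction P₁ t‖ ^ 2 ∂Λ := by
  simp_rw [hK]
  rw [mixed_eq Λ P₀ P₀, mixed_eq Λ P₁ P₁, mixed_eq Λ P₀ P₁]
  have hint : ∀ (P Q : Measure ℝ) [IsProbabilityMeasure P] [IsProbabilityMeasure Q],
      Integrable (fun t => cInt P t * cInt Q t + sInt P t * sInt Q t) Λ := by
    intro P Q _ _
    apply integrable_bdd (C := 2)
    · exact (((cInt_meas P).mul (cInt_meas Q)).add ((sInt_meas P).mul (sInt_meas Q))).aestronglyMeasurable
    · intro t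
      refine (abs_add_le _ _).trans ?_
      have h1 : |cInt P t * cInt Q t| ≤ 1 := by
        rw [abs_mul]; exact mul_le_one₀ (cInt_bdd P t) (abs_nonneg _) (cInt_bdd Q t)
      have h2 : |sInt P t * sInt Q t| ≤ 1 := by
        rw [abs_mul]; exact mul_le_one₀ (sInt_bdd P t) (abs_nonneg _) (sInt_bdd Q t)
      linarith
  have hpt : (∫ t, ‖charFunction P₀ t - charFunction P₁ t‖ ^ 2 ∂Λ)
      = ∫ t, ((cInt P₀ t * cInt P₀ t + sInt P₀ t * sInt P₀ t)
          + (cInt P₁ t * cInt P₁ t + sInt P₁ t * sInt P₁ t)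
          - 2 * (cInt P₀ t * cInt P₁ t + sInt P₀ t * sInt P₁ t)) ∂Λ := by
    refine integral_congr_ae (Filter.Eventually.of_forall fun t => ?_)
    show ‖charFunction P₀ t - charFunction P₁ t‖ ^ 2 = _
    rw [charFunction_eq P₀ t, charFunction_eq P₁ t, Complex.sq_norm, Complex.normSq_apply]
    simp only [Complex.add_re, Complex.add_im, Complex.sub_re, Complex.sub_im,
      Complex.mul_re, Complex.mul_im, Complex.I_re, Complex.I_im, Complex.ofReal_re,
      Complex.ofReal_im]
    ring
  have hA : Integrable (fun t => (cInt P₀ t * cInt P₀ t + sInt P₀ t * sInt P₀ t)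
      + (cInt P₁ t * cInt P₁ t + sInt P₁ t * sInt P₁ t)) Λ := (hint P₀ P₀).add (hint P₁ P₁)
  rw [hpt, integral_sub hA ((hint P₀ P₁).const_mul 2),
    integral_add (hint P₀ P₀) (hint P₁ P₁), integral_const_mul]
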